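/- Truth lemma for FOCL: for every state X of the canonical model and every sentence φ, G^C, X ⊨ φ if and only if φ ∈ X. -/

import Mathlib

/-- Terms: variables or constants. -/
inductive Tm (C : Type) : Type
  | var : ℕ → Tm C
  | const : C → Tm C
deriving DecidableEq

/-- Formulas of first-order coalition logic over a signature ⟨n, C, Ap⟩. -/
inductive Form (n : ℕ) (C : Type) (Ap : Type) : Type
  | atom : Ap → Form n C Ap
  | neg : Form n C Ap → Form n C Ap
  | and : Form n C Ap → Form n C Ap → Form n C Ap
  | box : (Fin n → Tm C) → Form n C Ap → Form n C Ap
  | all : ℕ → Form n C Ap → Form n C Ap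

namespace Form

variable {n : ℕ} {C Ap : Type}

def imp (φ ψ : Form n C Ap) : Form n C Ap := .neg (.and φ (.neg ψ))
def iff (φ ψ : Form n C Ap) : Form n C Ap := .and (imp φ ψ) (imp ψ φ)
def ex (x : ℕ) (φ : Form n C Ap) : Form n C Ap := .neg (.all x (.neg φ))

open Classical in
/-- Substitution of a term for a variable. -/
noncomputable def substT (t : Tm C) (x : ℕ) : Form n C Ap → Form n C Ap
  | .atom p => .atom p
  | .neg φ => .neg (substT t x φ)
  | .and φ ψ => .and (substT t x φ) (substT t x ψ)
  | .box ts φ => .box (fun i => if ts i = .var x then t else ts i) (substT t x φ)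
  | .all y φ => if y = x then .all y φ else .all y (substT t x φ)

/-- Substitution of a constant for a variable. -/
noncomputable def subst (a : C) (x : ℕ) (φ : Form n C Ap) : Form n C Ap := substT (.const a) x φ

/-- Free variables. -/
def FV : Form n C Ap → Finset ℕ
  | .atom _ => ∅
  | .neg φ => FV φ
  | .and φ ψ => FV φ ∪ FV ψ
  | .box ts φ => FV φ ∪ Finset.univ.biUnion (fun i => match ts i with | Tm.var x => {x} | _ => ∅)
  | .all y φ => FV φ \ {y}

/-- A sentence (closed formula). -/
def closed (φ : Form n C Ap) : Prop := FV φ = ∅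

/-- Universal closure of a formula. -/
def closure (φ : Form n C Ap) : Form n C Ap := ((FV φ).sort (· ≤ ·)).foldr Form.all φ

def size : Form n C Ap → ℕ
  | .atom _ => 1
  | .neg φ => size φ + 1
  | .and φ ψ => size φ + size ψ + 1
  | .box _ φ => size φ + 1
  | .all _ φ => size φ + 1

theorem size_substT (t : Tm C) (x : ℕ) (φ : Form n C Ap) :
    size (substT t x φ) = size φ := by
  induction φ with
  | atom p => rfl
  | neg φ ih => simp [substT, size, ih]
  | and φ ψ ih1 ih2 => simp [substT, size, ih1, ih2]
  | box ts φ ih => simp [substT, size, ih]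
  | all y φ ih => by_cases h : y = x <;> simp [substT, size, h, ih]

/-- Whether a term occurs in a formula. -/
def occursT (t : Tm C) : Form n C Ap → Prop
  | .atom _ => False
  | .neg φ => occursT t φ
  | .and φ ψ => occursT t φ ∨ occursT t ψ
  | .box ts φ => (∃ i, ts i = t) ∨ occursT t φ
  | .all y φ => (t = Tm.var y) ∨ occursT t φ

end Form

/-- A concurrent game structure over a signature ⟨n, C, Ap⟩ (actions = constants). -/
structure CGS (n : ℕ) (C : Type) (Ap : Type) where
  S : Type
  R : S → (Fin n → C) → S → Prop
  V : Ap → S → Prop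

namespace CGS

variable {n : ℕ} {C Ap : Type}

def Serial (G : CGS n C Ap) : Prop := ∀ s d, ∃ t, G.R s d t

def Functional (G : CGS n C Ap) : Prop := ∀ s d t v, G.R s d t → G.R s d v → t = v

end CGS

/-- Satisfaction of (closed) formulas in a CGS. -/
def Sat {n : ℕ} {C Ap : Type} (G : CGS n C Ap) : G.S → Form n C Ap → Prop
  | s, .atom p => G.V p s
  | s, .neg φ => ¬ Sat G s φ
  | s, .and φ ψ => Sat G s φ ∧ Sat G s ψ
  | s, .box ts φ => ∃ d : Fin n → C, (∀ i, ts i = Tm.const (d i)) ∧ ∃ t, G.R s d t ∧ Sat G t φ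
  | s, .all x φ => ∀ a : C, Sat G s (Form.subst a x φ)
termination_by _ φ => Form.size φ
decreasing_by all_goals simp [Form.subst, Form.size_substT, Form.size] <;> omega

/-- Truth of a possibly open formula: truth of its universal closure. -/
def SatC {n : ℕ} {C Ap : Type} (G : CGS n C Ap) (s : G.S) (φ : Form n C Ap) : Prop :=
  Sat G s (Form.closure φ)

/-- Validity in a CGS. -/
def ValidIn {n : ℕ} {C Ap : Type} (G : CGS n C Ap) (φ : Form n C Ap) : Prop :=
  ∀ s : G.S, SatC G s φ

/-- Propositional evaluation treating atoms, boxes and quantified formulas as atomic. -/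
def evalP {n : ℕ} {C Ap : Type} (v : Form n C Ap → Prop) : Form n C Ap → Prop
  | .neg φ => ¬ evalP v φ
  | .and φ ψ => evalP v φ ∧ evalP v ψ
  | .atom p => v (.atom p)
  | .box ts φ => v (.box ts φ)
  | .all x φ => v (.all x φ)

/-- Propositional tautologies. -/
def Taut {n : ℕ} {C Ap : Type} (φ : Form n C Ap) : Prop :=
  ∀ v : Form n C Ap → Prop, evalP v φ

/-- The axiom system of first-order coalition logic. -/
inductive Deriv {n : ℕ} {C Ap : Type} : Form n C Ap → Prop
  | PC {φ} : Taut φ → Deriv φ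
  | K (ts : Fin n → Tm C) (φ ψ) :
      Deriv (Form.iff (.and (.box ts φ) (.box ts ψ)) (.box ts (.and φ ψ)))
  | N (ts : Fin n → Tm C) (φ) :
      Deriv (Form.iff (.neg (.box ts φ)) (.box ts (.neg φ)))
  | E (x : ℕ) (t : Tm C) (φ) : Deriv (Form.imp (.all x φ) (Form.substT t x φ))
  | B (ts : Fin n → Tm C) (x : ℕ) (φ) (h : ∀ i, ts i ≠ Tm.var x) :
      Deriv (Form.imp (.all x (.box ts φ)) (.box ts (.all x φ)))
  | MP {φ ψ} : Deriv (Form.imp φ ψ) → Deriv φ → Deriv ψ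
  | Nec (ts : Fin n → Tm C) {φ} : Deriv φ → Deriv (.box ts φ)
  | Gen {φ ψ} (t : Tm C) (x : ℕ) :
      Deriv (Form.imp φ (Form.substT t x ψ)) → ¬ Form.occursT t φ →
      Deriv (Form.imp φ (.all x ψ))

/-- Derivability from a set of formulas. -/
def DerivFrom {n : ℕ} {C Ap : Type} (X : Set (Form n C Ap)) (φ : Form n C Ap) : Prop :=
  ∃ L : List (Form n C Ap), (∀ ψ ∈ L, ψ ∈ X) ∧ Deriv (L.foldr Form.imp φ)

def Consistent {n : ℕ} {C Ap : Type} (X : Set (Form n C Ap)) : Prop :=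
  ¬ ∃ φ, DerivFrom X φ ∧ DerivFrom X (.neg φ)

/-- A set of sentences. -/
def SentenceSet {n : ℕ} {C Ap : Type} (X : Set (Form n C Ap)) : Prop :=
  ∀ φ ∈ X, Form.closed φ

/-- Maximal consistent set (of sentences). -/
def MCS {n : ℕ} {C Ap : Type} (X : Set (Form n C Ap)) : Prop :=
  Consistent X ∧ ∀ ψ, Form.closed ψ → ψ ∉ X → ¬ Consistent (insert ψ X)

/-- The ∀-property. -/
def AllProp {n : ℕ} {C Ap : Type} (X : Set (Form n C Ap)) : Prop :=
  ∀ (φ : Form n C Ap) (x : ℕ), Form.FV φ ⊆ {x} →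
    ∃ a : C, Form.imp (Form.subst a x φ) (.all x φ) ∈ X

/-- The canonical model. -/
def canonical (n : ℕ) (C Ap : Type) : CGS n C Ap where
  S := {X : Set (Form n C Ap) // SentenceSet X ∧ MCS X ∧ AllProp X}
  R := fun X d Y => ∀ φ, φ ∈ Y.1 → Form.box (fun i => Tm.const (d i)) φ ∈ X.1
  V := fun p X => Form.atom p ∈ X.1

/-- Renaming of constants. -/
def Tm.mapC {C C' : Type} (f : C → C') : Tm C → Tm C'
  | .var x => .var x
  | .const c => .const (f c)

def Form.mapC {n : ℕ} {C C' Ap : Type} (f : C → C') : Form n C Ap → Form n C' Ap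
  | .atom p => .atom p
  | .neg φ => .neg (mapC f φ)
  | .and φ ψ => .and (mapC f φ) (mapC f ψ)
  | .box ts φ => .box (fun i => (ts i).mapC f) (mapC f φ)
  | .all y φ => .all y (mapC f φ)


section TruthLemmaAux

variable {n : ℕ} {C Ap : Type}

theorem evalP_imp (v : Form n C Ap → Prop) (p q : Form n C Ap) :
    evalP v (Form.imp p q) ↔ (evalP v p → evalP v q) := by
  simp only [Form.imp, evalP]; tauto

theorem evalP_foldr (v : Form n C Ap → Prop) (L : List (Form n C Ap)) (ψ : Form n C Ap) :
    evalP v (L.foldr Form.imp ψ) ↔ ((∀ χ ∈ L, evalP v χ) → evalP v ψ) := by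
  induction L with
  | nil => simp
  | cons χ L ih =>
    rw [List.foldr_cons, evalP_imp, ih]
    simp only [List.mem_cons]
    constructor
    · intro h1 h2; exact h1 (h2 χ (Or.inl rfl)) (fun χ1 hχ1 => h2 χ1 (Or.inr hχ1))
    · intro h1 hχv hL
      apply h1
      rintro χ1 (rfl | hm)
      exacts [hχv, hL χ1 hm]

theorem deriv_mp1 {A G : Form n C Ap} (ht : Taut (Form.imp A G)) (hA : Deriv A) : Deriv G :=
  Deriv.MP (Deriv.PC ht) hA

theorem deriv_mp2 {A B G : Form n C Ap} (ht : Taut (Form.imp A (Form.imp B G)))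
    (hA : Deriv A) (hB : Deriv B) : Deriv G :=
  Deriv.MP (Deriv.MP (Deriv.PC ht) hA) hB

theorem deriv_mp3 {A B D G : Form n C Ap} (ht : Taut (Form.imp A (Form.imp B (Form.imp D G))))
    (hA : Deriv A) (hB : Deriv B) (hD : Deriv D) : Deriv G :=
  Deriv.MP (Deriv.MP (Deriv.MP (Deriv.PC ht) hA) hB) hD

theorem derivFrom_mem {X : Set (Form n C Ap)} {φ : Form n C Ap} (h : φ ∈ X) : DerivFrom X φ :=
  ⟨[φ], by simpa using h,
    Deriv.PC (by intro v; rw [List.foldr_cons, List.foldr_nil, evalP_imp]; exact id)⟩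

theorem derivFrom_deriv {X : Set (Form n C Ap)} {φ : Form n C Ap} (h : Deriv φ) :
    DerivFrom X φ := ⟨[], by simp, h⟩

theorem derivFrom_mp2 {X : Set (Form n C Ap)} {A B G : Form n C Ap}
    (hA : DerivFrom X A) (hB : DerivFrom X B)
    (ht : Taut (Form.imp A (Form.imp B G))) : DerivFrom X G := by
  obtain ⟨LA, hLA, hdA⟩ := hA
  obtain ⟨LB, hLB, hdB⟩ := hB
  refine ⟨LA ++ LB, ?_, ?_⟩
  · intro ψ h; rcases List.mem_append.1 h with h | h
    exacts [hLA ψ h, hLB ψ h]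
  · refine deriv_mp2 ?_ hdA hdB
    intro v
    rw [evalP_imp, evalP_imp, evalP_foldr, evalP_foldr, evalP_foldr]
    have hv := ht v; rw [evalP_imp, evalP_imp] at hv
    intro h1 h2 h3
    exact hv (h1 fun χ hχ => h3 χ (List.mem_append.2 (Or.inl hχ)))
      (h2 fun χ hχ => h3 χ (List.mem_append.2 (Or.inr hχ)))

theorem derivFrom_mp1 {X : Set (Form n C Ap)} {A G : Form n C Ap}
    (hA : DerivFrom X A) (ht : Taut (Form.imp A G)) : DerivFrom X G :=
  derivFrom_mp2 hA hA (by
    intro v; rw [evalP_imp, evalP_imp]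
    have hv := ht v; rw [evalP_imp] at hv; tauto)

open Classical in
theorem derivFrom_insert {X : Set (Form n C Ap)} {φ ψ : Form n C Ap}
    (h : DerivFrom (insert φ X) ψ) : DerivFrom X (Form.imp φ ψ) := by
  obtain ⟨L, hL, hd⟩ := h
  refine ⟨L.filter (fun χ => decide (χ ∈ X)), ?_, ?_⟩
  · intro χ hχ
    exact of_decide_eq_true (List.mem_filter.1 hχ).2
  · refine Deriv.MP (Deriv.PC ?_) hd
    intro v
    rw [evalP_imp, evalP_foldr, evalP_foldr, evalP_imp]
    intro h1 h2 h3
    apply h1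
    intro χ hχ
    rcases Set.mem_insert_iff.1 (hL χ hχ) with heq | hX
    · exact heq ▸ h3
    · exact h2 χ (List.mem_filter.2 ⟨hχ, decide_eq_true hX⟩)

end TruthLemmaAux
section TruthLemmaAux2

variable {n : ℕ} {C Ap : Type}

theorem taut_id (φ ψ : Form n C Ap) : Taut (Form.imp (Form.imp φ ψ) (Form.imp φ ψ)) := by
  intro v; rw [evalP_imp]; exact id

theorem closed_neg {φ : Form n C Ap} : Form.closed (Form.neg φ) ↔ Form.closed φ := Iff.rfl

theorem closed_and {φ ψ : Form n C Ap} :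
    Form.closed (Form.and φ ψ) ↔ Form.closed φ ∧ Form.closed ψ := by
  simp [Form.closed, Form.FV, Finset.union_eq_empty]

theorem closed_imp {φ ψ : Form n C Ap} :
    Form.closed (Form.imp φ ψ) ↔ Form.closed φ ∧ Form.closed ψ := by
  simp [Form.imp, Form.closed, Form.FV, Finset.union_eq_empty]

theorem MCS.mem_of_derivFrom {X : Set (Form n C Ap)} (hM : MCS X) {φ : Form n C Ap}
    (hcl : Form.closed φ) (h : DerivFrom X φ) : φ ∈ X := by
  by_contra hn
  obtain ⟨ψ, h1, h2⟩ := not_not.1 (hM.2 φ hcl hn)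
  exact hM.1 ⟨ψ, derivFrom_mp2 (derivFrom_insert h1) h (taut_id φ ψ),
    derivFrom_mp2 (derivFrom_insert h2) h (taut_id φ (Form.neg ψ))⟩

theorem MCS.neg_mem_iff {X : Set (Form n C Ap)} (hM : MCS X) {φ : Form n C Ap}
    (hcl : Form.closed φ) : Form.neg φ ∈ X ↔ φ ∉ X := by
  constructor
  · intro h hφ
    exact hM.1 ⟨φ, derivFrom_mem hφ, derivFrom_mem h⟩
  · intro h
    obtain ⟨ψ, h1, h2⟩ := not_not.1 (hM.2 φ hcl h)
    refine hM.mem_of_derivFrom (closed_neg.2 hcl) ?_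
    refine derivFrom_mp2 (derivFrom_insert h1) (derivFrom_insert h2) ?_
    intro v
    simp only [evalP_imp, evalP]
    tauto

theorem MCS.and_mem_iff {X : Set (Form n C Ap)} (hM : MCS X) {φ ψ : Form n C Ap}
    (h1 : Form.closed φ) (h2 : Form.closed ψ) :
    Form.and φ ψ ∈ X ↔ φ ∈ X ∧ ψ ∈ X := by
  constructor
  · intro h
    constructor
    · refine hM.mem_of_derivFrom h1 (derivFrom_mp1 (derivFrom_mem h) ?_)
      intro v; rw [evalP_imp]; simp only [evalP]; tauto
    · refine hM.mem_of_derivFrom h2 (derivFrom_mp1 (derivFrom_mem h) ?_)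
      intro v; rw [evalP_imp]; simp only [evalP]; tauto
  · rintro ⟨hφ, hψ⟩
    refine hM.mem_of_derivFrom (closed_and.2 ⟨h1, h2⟩)
      (derivFrom_mp2 (derivFrom_mem hφ) (derivFrom_mem hψ) ?_)
    intro v; simp only [evalP_imp, evalP]; tauto

theorem MCS.mem_of_imp {X : Set (Form n C Ap)} (hM : MCS X) {φ ψ : Form n C Ap}
    (hd : Deriv (Form.imp φ ψ)) (hφ : φ ∈ X) (hcl : Form.closed ψ) : ψ ∈ X :=
  hM.mem_of_derivFrom hcl
    (derivFrom_mp2 (derivFrom_deriv hd) (derivFrom_mem hφ) (taut_id φ ψ))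

theorem deriv_box_imp (d : Fin n → Tm C) (φ ψ : Form n C Ap) :
    Deriv (Form.iff (.box d (Form.imp φ ψ)) (Form.imp (.box d φ) (.box d ψ))) := by
  refine deriv_mp3 ?_ (Deriv.N d (Form.and φ (.neg ψ))) (Deriv.K d φ (.neg ψ)) (Deriv.N d ψ)
  intro v
  simp only [Form.iff, Form.imp, evalP]
  tauto

theorem taut_chain (A B Cc M : Form n C Ap) :
    Taut (Form.imp (Form.iff A (Form.imp B Cc))
      (Form.imp (Form.imp Cc M) (Form.imp A (Form.imp B M)))) := by
  intro v
  simp only [Form.iff, Form.imp, evalP]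
  tauto

theorem deriv_box_foldr (d : Fin n → Tm C) (L : List (Form n C Ap)) (ψ : Form n C Ap) :
    Deriv (Form.imp (.box d (L.foldr Form.imp ψ))
      ((L.map (Form.box d)).foldr Form.imp (.box d ψ))) := by
  induction L with
  | nil =>
    exact Deriv.PC (by
      intro v; rw [List.foldr_nil, List.map_nil, List.foldr_nil, evalP_imp]; exact id)
  | cons χ L ih =>
    rw [List.foldr_cons, List.map_cons, List.foldr_cons]
    exact deriv_mp2 (taut_chain _ _ _ _) (deriv_box_imp d χ (L.foldr Form.imp ψ)) ih

end TruthLemmaAux2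
section TruthLemmaAux3

variable {n : ℕ} {C Ap : Type}

theorem FV_substT_const (a : C) (x : ℕ) (φ : Form n C Ap) :
    Form.FV (Form.substT (Tm.const a) x φ) = Form.FV φ \ {x} := by
  induction φ with
  | atom p => simp [Form.substT, Form.FV]
  | neg φ ih => simpa [Form.substT, Form.FV] using ih
  | and φ ψ ih1 ih2 =>
    simp only [Form.substT, Form.FV, ih1, ih2, Finset.union_sdiff_distrib]
  | box ts φ ih =>
    simp only [Form.substT, Form.FV, ih, Finset.union_sdiff_distrib]
    congr 1
    ext y
    simp only [Finset.mem_biUnion, Finset.mem_univ, true_and, Finset.mem_sdiff,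
      Finset.mem_singleton]
    constructor
    · rintro ⟨i, hi⟩
      by_cases h : ts i = Tm.var x
      · rw [if_pos h] at hi; simp at hi
      · rw [if_neg h] at hi
        refine ⟨⟨i, hi⟩, ?_⟩
        rintro rfl
        cases hts : ts i with
        | var z => rw [hts] at hi; simp at hi; exact h (by rw [hts, hi])
        | const c => rw [hts] at hi; simp at hi
    · rintro ⟨⟨i, hi⟩, hyx⟩
      refine ⟨i, ?_⟩
      have h : ts i ≠ Tm.var x := by
        intro h
        rw [h] at hi; simp at hi; exact hyx hi
      rw [if_neg h]; exact hi
  | all y φ ih =>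
    by_cases h : y = x
    · subst h
      simp only [Form.substT, if_pos rfl, ↓reduceIte, Form.FV]
      rw [Finset.sdiff_idem]
    · simp only [Form.substT, if_neg h, Form.FV, ih]
      rw [Finset.sdiff_sdiff_left', Finset.sdiff_sdiff_left', Finset.inter_comm]

theorem closed_subst {a : C} {x : ℕ} {φ : Form n C Ap} (h : Form.FV φ ⊆ {x}) :
    Form.closed (Form.subst a x φ) := by
  rw [Form.closed, Form.subst, FV_substT_const]
  exact Finset.sdiff_eq_empty_iff_subset.2 h

theorem closed_all_iff {x : ℕ} {φ : Form n C Ap} :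
    Form.closed (Form.all x φ) ↔ Form.FV φ ⊆ {x} := by
  rw [Form.closed, Form.FV, Finset.sdiff_eq_empty_iff_subset]

theorem FV_box_const (d : Fin n → C) (φ : Form n C Ap) :
    Form.FV (Form.box (fun i => Tm.const (d i)) φ) = Form.FV φ := by
  simp only [Form.FV]
  have : (Finset.univ.biUnion fun i =>
      (match (Tm.const (d i) : Tm C) with | Tm.var x => {x} | _ => ∅)) = (∅ : Finset ℕ) := by
    ext y; simp
  rw [this, Finset.union_empty]

theorem substT_box_const (a : C) (x : ℕ) (d : Fin n → C) (φ : Form n C Ap) :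
    Form.substT (Tm.const a) x (Form.box (fun i => Tm.const (d i)) φ)
      = Form.box (fun i => Tm.const (d i)) (Form.substT (Tm.const a) x φ) := by
  simp only [Form.substT]
  congr 1

end TruthLemmaAux3
section TruthLemmaAux4

variable {n : ℕ} {C Ap : Type}

def Ybase (X : Set (Form n C Ap)) (d : Fin n → C) : Set (Form n C Ap) :=
  {ψ | Form.closed ψ ∧ Form.box (fun i => Tm.const (d i)) ψ ∈ X}

theorem derivFrom_box_Ybase {X : Set (Form n C Ap)} {d : Fin n → C} {ψ : Form n C Ap}
    (h : DerivFrom (Ybase X d) ψ) :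
    DerivFrom X (Form.box (fun i => Tm.const (d i)) ψ) := by
  obtain ⟨L, hL, hd⟩ := h
  refine ⟨L.map (Form.box (fun i => Tm.const (d i))), ?_, ?_⟩
  · intro χ hχ
    obtain ⟨χ', hχ', rfl⟩ := List.mem_map.1 hχ
    exact (hL χ' hχ').2
  · exact Deriv.MP (deriv_box_foldr _ L ψ) (Deriv.Nec _ hd)

theorem Ybase_consistent {X : Set (Form n C Ap)} (hC : Consistent X) (d : Fin n → C) :
    Consistent (Ybase X d) := by
  rintro ⟨ψ, h1, h2⟩
  have b1 := derivFrom_box_Ybase h1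
  have b2 := derivFrom_box_Ybase h2
  have b3 : DerivFrom X (Form.neg (Form.box (fun i => Tm.const (d i)) ψ)) :=
    derivFrom_mp2 (derivFrom_deriv (Deriv.N _ ψ)) b2
      (by intro v; simp only [Form.iff, Form.imp, evalP]; tauto)
  exact hC ⟨_, b1, b3⟩

theorem Ybase_mcs {X : Set (Form n C Ap)} (hM : MCS X) (d : Fin n → C) :
    MCS (Ybase X d) := by
  refine ⟨Ybase_consistent hM.1 d, ?_⟩
  intro ψ hclψ hψ hcon
  have hbox : Form.box (fun i => Tm.const (d i)) ψ ∉ X := fun h => hψ ⟨hclψ, h⟩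
  have hclb : Form.closed (Form.box (fun i => Tm.const (d i)) ψ) := by
    rw [Form.closed, FV_box_const]; exact hclψ
  have hneg : Form.neg (Form.box (fun i => Tm.const (d i)) ψ) ∈ X :=
    (hM.neg_mem_iff hclb).2 hbox
  have hbn : Form.box (fun i => Tm.const (d i)) (Form.neg ψ) ∈ X := by
    refine hM.mem_of_imp ?_ hneg (by rw [Form.closed, FV_box_const]; exact hclψ)
    refine deriv_mp1 ?_ (Deriv.N (fun i => Tm.const (d i)) ψ)
    intro v; simp only [Form.iff, Form.imp, evalP]; tauto
  exact hcon ⟨ψ, derivFrom_mem (Set.mem_insert _ _),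
    derivFrom_mem (Set.mem_insert_of_mem _ ⟨hclψ, hbn⟩)⟩

theorem Ybase_allprop {X : Set (Form n C Ap)} (hM : MCS X) (hA : AllProp X)
    (d : Fin n → C) : AllProp (Ybase X d) := by
  intro φ x hx
  have hxb : Form.FV (Form.box (fun i => Tm.const (d i)) φ) ⊆ {x} := by
    rw [FV_box_const]; exact hx
  obtain ⟨a, ha⟩ := hA (Form.box (fun i => Tm.const (d i)) φ) x hxb
  rw [Form.subst, substT_box_const] at ha
  have hclimp : Form.closed (Form.imp (Form.subst a x φ) (.all x φ)) :=
    closed_imp.2 ⟨closed_subst hx, closed_all_iff.2 hx⟩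
  refine ⟨a, hclimp, ?_⟩
  have hB : Deriv (Form.imp (.all x (.box (fun i => Tm.const (d i)) φ))
      (.box (fun i => Tm.const (d i)) (.all x φ))) :=
    Deriv.B _ x φ (fun i => by simp)
  have hbi := deriv_box_imp (fun i => Tm.const (d i)) (Form.subst a x φ) (.all x φ)
  refine hM.mem_of_derivFrom ?_ ?_
  · rw [Form.closed, FV_box_const]; exact hclimp
  · have h1 : DerivFrom X (Form.imp (.box (fun i => Tm.const (d i)) (Form.subst a x φ))
        (.box (fun i => Tm.const (d i)) (.all x φ))) :=
      derivFrom_mp2 (derivFrom_mem ha) (derivFrom_deriv hB)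
        (by intro v; simp only [Form.imp, evalP]; tauto)
    exact derivFrom_mp2 h1 (derivFrom_deriv hbi)
      (by intro v; simp only [Form.iff, Form.imp, evalP]; tauto)

theorem exists_succ (X : (canonical n C Ap).S) (d : Fin n → C) {ψ : Form n C Ap}
    (hclψ : Form.closed ψ) (h : Form.box (fun i => Tm.const (d i)) ψ ∈ X.1) :
    ∃ Y : (canonical n C Ap).S, (canonical n C Ap).R X d Y ∧ ψ ∈ Y.1 := by
  obtain ⟨hS, hM, hA⟩ := X.2
  exact ⟨⟨Ybase X.1 d, fun φ hφ => hφ.1, Ybase_mcs hM d, Ybase_allprop hM hA d⟩,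
    fun φ hφ => hφ.2, hclψ, h⟩

end TruthLemmaAux4
section TruthLemmaMain

variable {n : ℕ} {C Ap : Type}

theorem truth_aux [Nonempty C] :
    ∀ (k : ℕ) (φ : Form n C Ap), Form.size φ ≤ k → ∀ X : (canonical n C Ap).S,
      Form.closed φ → (Sat (canonical n C Ap) X φ ↔ φ ∈ X.1) := by
  intro k
  induction k with
  | zero => intro φ h; cases φ <;> simp [Form.size] at h
  | succ k ih =>
    intro φ hs X hcl
    obtain ⟨hS, hM, hA⟩ := X.2
    cases φ with
    | atom p =>
      rw [Sat]
      exact Iff.rfl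
    | neg φ =>
      have hφk : Form.size φ ≤ k := by simp [Form.size] at hs; omega
      rw [Sat, ih φ hφk X hcl]
      exact (hM.neg_mem_iff (φ := φ) hcl).symm
    | and φ ψ =>
      have hφk : Form.size φ ≤ k := by simp [Form.size] at hs; omega
      have hψk : Form.size ψ ≤ k := by simp [Form.size] at hs; omega
      obtain ⟨h1, h2⟩ := closed_and.1 hcl
      rw [Sat, ih φ hφk X h1, ih ψ hψk X h2]
      exact (hM.and_mem_iff h1 h2).symm
    | box ts φ =>
      have hφk : Form.size φ ≤ k := by simp [Form.size] at hs; omega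
      have hcl' : Form.FV (Form.box ts φ) = ∅ := hcl
      rw [Form.FV] at hcl'
      obtain ⟨hclφ, hB⟩ := Finset.union_eq_empty.1 hcl'
      have hdex : ∀ i, ∃ c, ts i = Tm.const c := by
        intro i
        cases hti : ts i with
        | var x =>
          exfalso
          have hx : x ∈ (∅ : Finset ℕ) := by
            rw [← hB]
            simp only [Finset.mem_biUnion, Finset.mem_univ, true_and]
            refine ⟨i, ?_⟩
            rw [hti]
            exact Finset.mem_singleton_self x
          simp at hx
        | const c => exact ⟨c, rfl⟩
      choose d hdc using hdex
      have hts : ts = fun i => Tm.const (d i) := funext hdc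
      rw [Sat]
      constructor
      · rintro ⟨d', hd', Y, hR, hSat⟩
        have hφY : φ ∈ Y.1 := (ih φ hφk Y hclφ).1 hSat
        have hbx : Form.box (fun i => Tm.const (d' i)) φ ∈ X.1 := hR φ hφY
        rw [show ts = fun i => Tm.const (d' i) from funext hd']
        exact hbx
      · intro hmem
        rw [hts] at hmem
        obtain ⟨Y, hR, hφY⟩ := exists_succ X d hclφ hmem
        exact ⟨d, fun i => hdc i, Y, hR, (ih φ hφk Y hclφ).2 hφY⟩
    | all x φ =>
      have hφk : Form.size φ ≤ k := by simp [Form.size] at hs; omega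
      have hx : Form.FV φ ⊆ {x} := closed_all_iff.1 hcl
      have ihs : ∀ a : C,
          (Sat (canonical n C Ap) X (Form.subst a x φ) ↔ Form.subst a x φ ∈ X.1) :=
        fun a => ih _ (by rw [Form.subst, Form.size_substT]; exact hφk) X (closed_subst hx)
      rw [Sat]
      constructor
      · intro h
        obtain ⟨a, ha⟩ := hA φ x hx
        have hsub : Form.subst a x φ ∈ X.1 := (ihs a).1 (h a)
        exact hM.mem_of_derivFrom hcl
          (derivFrom_mp2 (derivFrom_mem ha) (derivFrom_mem hsub) (taut_id _ _))
      · intro h a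
        exact (ihs a).2 (hM.mem_of_imp (Deriv.E x (Tm.const a) φ) h (closed_subst hx))

end TruthLemmaMain

/-- the Truth lemma for the canonical model. -/
theorem truth_lemma {n : ℕ} {C Ap : Type} [Infinite C] [Countable C]
    [Countable Ap] [Nonempty Ap]
    (X : (canonical n C Ap).S) (φ : Form n C Ap) (hcl : Form.closed φ) :
    Sat (canonical n C Ap) X φ ↔ φ ∈ X.1 :=
  truth_aux (Form.size φ) φ le_rfl X hcl
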